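/- Let χ be a weighted game on n voters with exactly two types of voters, without null voters, and with at least two distinct types of shift-minimal winning coalitions (r ≥ 2). Then every LP-feasible triple (w1, w2, q) of nonnegative reals satisfies w1 ≥ w2 + 1. -/
import Mathlib


def SimpleGame (n : ℕ) (χ : Finset (Fin n) → Prop) : Prop :=
  (∀ U V : Finset (Fin n), U ⊆ V → χ U → χ V) ∧ ¬ χ (∅ : Finset (Fin n)) ∧ χ Finset.univ

def IsRep {n : ℕ} (χ : Finset (Fin n) → Prop) (q : ℕ) (w : Fin n → ℕ) : Prop :=
  ∀ U : Finset (Fin n), χ U ↔ q ≤ ∑ i ∈ U, w i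

def IsWeighted {n : ℕ} (χ : Finset (Fin n) → Prop) : Prop :=
  ∃ q w, IsRep χ q w

def MinRep {n : ℕ} (χ : Finset (Fin n) → Prop) (q : ℕ) (w : Fin n → ℕ) : Prop :=
  IsRep χ q w ∧ ∀ q' w', IsRep χ q' w' → ∀ i, w i ≤ w' i

def Desir {n : ℕ} (χ : Finset (Fin n) → Prop) (i j : Fin n) : Prop :=
  ∀ U : Finset (Fin n), j ∈ U → i ∉ U → χ U → χ (insert i (U.erase j))

def VEquiv {n : ℕ} (χ : Finset (Fin n) → Prop) (i j : Fin n) : Prop :=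
  Desir χ i j ∧ Desir χ j i

def StrictDesir {n : ℕ} (χ : Finset (Fin n) → Prop) (i j : Fin n) : Prop :=
  Desir χ i j ∧ ¬ Desir χ j i

def NullVoter {n : ℕ} (χ : Finset (Fin n) → Prop) (i : Fin n) : Prop :=
  ∀ U : Finset (Fin n), χ (insert i U) ↔ χ U

def ShiftMinWin {n : ℕ} (χ : Finset (Fin n) → Prop) (U : Finset (Fin n)) : Prop :=
  χ U ∧ (∀ i ∈ U, ¬ χ (U.erase i)) ∧
    ∀ i ∈ U, ∀ j, j ∉ U → StrictDesir χ i j → ¬ χ (insert j (U.erase i))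

def ShiftMaxLose {n : ℕ} (χ : Finset (Fin n) → Prop) (U : Finset (Fin n)) : Prop :=
  ¬ χ U ∧ (∀ j, j ∉ U → χ (insert j U)) ∧
    ∀ j ∈ U, ∀ i, i ∉ U → StrictDesir χ i j → χ (insert i (U.erase j))

def TwoTypes {n : ℕ} (χ : Finset (Fin n) → Prop) (N1 N2 : Finset (Fin n)) : Prop :=
  N1.Nonempty ∧ N2.Nonempty ∧ Disjoint N1 N2 ∧ N1 ∪ N2 = Finset.univ ∧
  (∀ i ∈ N1, ∀ j ∈ N1, VEquiv χ i j) ∧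
  (∀ i ∈ N2, ∀ j ∈ N2, VEquiv χ i j) ∧
  (∀ i ∈ N1, ∀ j ∈ N2, StrictDesir χ i j)

noncomputable def NumWinTypes2 {n : ℕ} (χ : Finset (Fin n) → Prop) (N1 N2 : Finset (Fin n)) : ℕ :=
  Set.ncard {p : ℕ × ℕ | ∃ U, ShiftMinWin χ U ∧ p = ((U ∩ N1).card, (U ∩ N2).card)}

def LPFeasible {n : ℕ} (χ : Finset (Fin n) → Prop) (N1 N2 : Finset (Fin n))
    (w1 w2 q : ℝ) : Prop :=
  0 ≤ w1 ∧ 0 ≤ w2 ∧ 0 ≤ q ∧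
  (∀ U, ShiftMinWin χ U → q ≤ ((U ∩ N1).card : ℝ) * w1 + ((U ∩ N2).card : ℝ) * w2) ∧
  (∀ U, ShiftMaxLose χ U → ((U ∩ N1).card : ℝ) * w1 + ((U ∩ N2).card : ℝ) * w2 ≤ q - 1)

def GameIso (n : ℕ) (χ χ' : Finset (Fin n) → Prop) : Prop :=
  ∃ σ : Equiv.Perm (Fin n), ∀ U : Finset (Fin n), χ' U ↔ χ (U.image σ)

noncomputable def NumTypes (n : ℕ) (χ : Finset (Fin n) → Prop) : ℕ :=
  Set.ncard {S : Set (Fin n) | ∃ i, S = {j | VEquiv χ i j}}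

noncomputable def ClassCount (n : ℕ) (χ : Finset (Fin n) → Prop) (U : Finset (Fin n)) (i : Fin n) : ℕ :=
  Set.ncard {j : Fin n | j ∈ U ∧ VEquiv χ i j}

def SameType (n : ℕ) (χ : Finset (Fin n) → Prop) (U V : Finset (Fin n)) : Prop :=
  ∀ i, ClassCount n χ U i = ClassCount n χ V i

noncomputable def NumSMWTypes (n : ℕ) (χ : Finset (Fin n) → Prop) : ℕ :=
  Set.ncard {T : Set (Finset (Fin n)) | ∃ U, ShiftMinWin χ U ∧
    T = {V | ShiftMinWin χ V ∧ SameType n χ U V}}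

noncomputable def wmntr (n t r : ℕ) : ℕ :=
  Set.ncard {C : Set (Finset (Fin n) → Prop) | ∃ χ, SimpleGame n χ ∧ IsWeighted χ ∧
    NumTypes n χ = t ∧ NumSMWTypes n χ = r ∧ C = {χ' | GameIso n χ χ'}}

noncomputable def wmnt (n t : ℕ) : ℕ :=
  Set.ncard {C : Set (Finset (Fin n) → Prop) | ∃ χ, SimpleGame n χ ∧ IsWeighted χ ∧
    NumTypes n χ = t ∧ C = {χ' | GameIso n χ χ'}}

def PreservesTypes {n : ℕ} (χ : Finset (Fin n) → Prop) (w : Fin n → ℕ) : Prop :=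
  ∀ i j, VEquiv χ i j → w i = w j

def MinRepPT {n : ℕ} (χ : Finset (Fin n) → Prop) (q : ℕ) (w : Fin n → ℕ) : Prop :=
  IsRep χ q w ∧ PreservesTypes χ w ∧
    ∀ q' w', IsRep χ q' w' → PreservesTypes χ w' → ∀ i, w i ≤ w' i

def Repre (a b k : ℕ) : Prop := ∃ u v : ℕ, u * a + v * b = k

def Wvec (t a b : ℕ) (l : Fin t → ℕ) (k : Fin t) : Fin (t + b + a) → ℕ :=
  fun i => if h : (i : ℕ) < t then
      (a * b - l ⟨(i : ℕ), h⟩ - 1) + (if (i : ℕ) = (k : ℕ) then 0 else 1)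
    else if (i : ℕ) < t + b then a else b

section Aux

variable {n : ℕ} {χ : Finset (Fin n) → Prop} {N1 N2 : Finset (Fin n)}

lemma swap_iff {i i' : Fin n} (hiq : VEquiv χ i i') {U : Finset (Fin n)}
    (hi : i ∈ U) (hi' : i' ∉ U) : χ U ↔ χ (insert i' (U.erase i)) := by
  have hne : i ≠ i' := fun h => hi' (h ▸ hi)
  constructor
  · exact fun h => hiq.2 U hi hi' h
  · intro h
    have hinotin : i ∉ insert i' (U.erase i) := by
      simp only [Finset.mem_insert]
      push_neg
      exact ⟨hne, Finset.notMem_erase i U⟩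
    have h2 := hiq.1 (insert i' (U.erase i)) (Finset.mem_insert_self _ _) hinotin h
    rwa [Finset.erase_insert (fun hc => hi' (Finset.mem_of_mem_erase hc)),
      Finset.insert_erase hi] at h2

lemma eq_of_subset_cards (hcover : N1 ∪ N2 = Finset.univ) {U V : Finset (Fin n)}
    (hUV : U ⊆ V)
    (h1 : (U ∩ N1).card = (V ∩ N1).card) (h2 : (U ∩ N2).card = (V ∩ N2).card) :
    U = V := by
  have e1 : U ∩ N1 = V ∩ N1 :=
    Finset.eq_of_subset_of_card_le (Finset.inter_subset_inter hUV (subset_refl N1)) h1.ge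
  have e2 : U ∩ N2 = V ∩ N2 :=
    Finset.eq_of_subset_of_card_le (Finset.inter_subset_inter hUV (subset_refl N2)) h2.ge
  apply Finset.Subset.antisymm hUV
  intro x hx
  have : x ∈ V ∩ (N1 ∪ N2) := by
    rw [hcover]; simp [hx]
  rw [Finset.inter_union_distrib_left, ← e1, ← e2] at this
  rcases Finset.mem_union.mp this with h | h
  · exact Finset.mem_of_mem_inter_left h
  · exact Finset.mem_of_mem_inter_left h

lemma typeDet (hdisj : Disjoint N1 N2) (hcover : N1 ∪ N2 = Finset.univ)
    (heq1 : ∀ i ∈ N1, ∀ j ∈ N1, VEquiv χ i j)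
    (heq2 : ∀ i ∈ N2, ∀ j ∈ N2, VEquiv χ i j) :
    ∀ k (U V : Finset (Fin n)), (U \ V).card ≤ k →
      (U ∩ N1).card = (V ∩ N1).card → (U ∩ N2).card = (V ∩ N2).card → (χ U ↔ χ V) := by
  intro k
  induction k with
  | zero =>
    intro U V hc h1 h2
    have : U ⊆ V := by
      rw [← Finset.sdiff_eq_empty_iff_subset]
      exact Finset.card_eq_zero.mp (Nat.le_zero.mp hc)
    rw [eq_of_subset_cards hcover this h1 h2]
  | succ k ih =>
    intro U V hc h1 h2
    by_cases hE : U \ V = ∅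
    · have : U ⊆ V := Finset.sdiff_eq_empty_iff_subset.mp hE
      rw [eq_of_subset_cards hcover this h1 h2]
    · obtain ⟨i, hi⟩ := Finset.nonempty_iff_ne_empty.mpr hE
      have hiU : i ∈ U := (Finset.mem_sdiff.mp hi).1
      have hiV : i ∉ V := (Finset.mem_sdiff.mp hi).2
      have hiN : i ∈ N1 ∪ N2 := by rw [hcover]; exact Finset.mem_univ i
      -- generic step for a class C with its equivalence and card hyps
      have step : ∀ C D : Finset (Fin n), C ∪ D = N1 ∪ N2 → Disjoint C D →
          (∀ a ∈ C, ∀ b ∈ C, VEquiv χ a b) →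
          (U ∩ C).card = (V ∩ C).card → (U ∩ D).card = (V ∩ D).card →
          i ∈ C →
          ((U ∩ C).card = (V ∩ C).card → (U ∩ D).card = (V ∩ D).card → True) →
          True := fun _ _ _ _ _ _ _ _ _ => trivial
      clear step
      rcases Finset.mem_union.mp hiN with hiC | hiC
      · -- i ∈ N1
        have hex : ∃ i', i' ∈ V ∩ N1 ∧ i' ∉ U := by
          by_contra hcon
          push_neg at hcon
          have hsub : V ∩ N1 ⊆ U ∩ N1 := fun x hx =>
            Finset.mem_inter.mpr ⟨hcon x hx, Finset.mem_of_mem_inter_right hx⟩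
          have : V ∩ N1 = U ∩ N1 := Finset.eq_of_subset_of_card_le hsub h1.le
          have : i ∈ V ∩ N1 := this ▸ Finset.mem_inter.mpr ⟨hiU, hiC⟩
          exact hiV (Finset.mem_of_mem_inter_left this)
        obtain ⟨i', hi'V, hi'U⟩ := hex
        have hi'N1 : i' ∈ N1 := Finset.mem_of_mem_inter_right hi'V
        have hi'V' : i' ∈ V := Finset.mem_of_mem_inter_left hi'V
        set U' := insert i' (U.erase i) with hU'
        have hswap : χ U ↔ χ U' := swap_iff (heq1 i hiC i' hi'N1) hiU hi'U
        have hiN2 : i ∉ N2 := fun h => (Finset.disjoint_left.mp hdisj hiC) h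
        have hi'N2 : i' ∉ N2 := fun h => (Finset.disjoint_left.mp hdisj hi'N1) h
        have hc' : (U' \ V).card ≤ k := by
          have hsub : U' \ V ⊆ (U \ V).erase i := by
            intro x hx
            rcases Finset.mem_sdiff.mp hx with ⟨hx1, hx2⟩
            rcases Finset.mem_insert.mp hx1 with h | h
            · exact absurd (h ▸ hi'V') hx2
            · exact Finset.mem_erase.mpr ⟨(Finset.mem_erase.mp h).1,
                Finset.mem_sdiff.mpr ⟨(Finset.mem_erase.mp h).2, hx2⟩⟩
          calc (U' \ V).card ≤ ((U \ V).erase i).card := Finset.card_le_card hsub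
            _ = (U \ V).card - 1 := Finset.card_erase_of_mem hi
            _ ≤ k := by omega
        have hU'1 : (U' ∩ N1).card = (U ∩ N1).card := by
          have e1 : U' ∩ N1 = insert i' ((U ∩ N1).erase i) := by
            ext x
            simp only [hU', Finset.mem_inter, Finset.mem_insert, Finset.mem_erase]
            constructor
            · rintro ⟨h | ⟨hxi, hxU⟩, hxN⟩
              · exact Or.inl h
              · exact Or.inr ⟨hxi, hxU, hxN⟩
            · rintro (h | ⟨hxi, hxU, hxN⟩)
              · exact ⟨Or.inl h, h ▸ hi'N1⟩
              · exact ⟨Or.inr ⟨hxi, hxU⟩, hxN⟩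
          rw [e1, Finset.card_insert_of_notMem (fun h => hi'U
              (Finset.mem_of_mem_inter_left (Finset.mem_of_mem_erase h))),
            Finset.card_erase_of_mem (Finset.mem_inter.mpr ⟨hiU, hiC⟩)]
          have : 0 < (U ∩ N1).card := Finset.card_pos.mpr ⟨i, Finset.mem_inter.mpr ⟨hiU, hiC⟩⟩
          omega
        have hU'2 : U' ∩ N2 = U ∩ N2 := by
          ext x
          simp only [hU', Finset.mem_inter, Finset.mem_insert, Finset.mem_erase]
          constructor
          · rintro ⟨h | ⟨hxi, hxU⟩, hxN⟩
            · exact absurd (h ▸ hxN) hi'N2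
            · exact ⟨hxU, hxN⟩
          · rintro ⟨hxU, hxN⟩
            exact ⟨Or.inr ⟨fun h => hiN2 (h ▸ hxN), hxU⟩, hxN⟩
        rw [hswap]
        exact ih U' V hc' (hU'1.trans h1) (hU'2 ▸ h2)
      · -- i ∈ N2, symmetric
        have hex : ∃ i', i' ∈ V ∩ N2 ∧ i' ∉ U := by
          by_contra hcon
          push_neg at hcon
          have hsub : V ∩ N2 ⊆ U ∩ N2 := fun x hx =>
            Finset.mem_inter.mpr ⟨hcon x hx, Finset.mem_of_mem_inter_right hx⟩
          have : V ∩ N2 = U ∩ N2 := Finset.eq_of_subset_of_card_le hsub h2.le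
          have : i ∈ V ∩ N2 := this ▸ Finset.mem_inter.mpr ⟨hiU, hiC⟩
          exact hiV (Finset.mem_of_mem_inter_left this)
        obtain ⟨i', hi'V, hi'U⟩ := hex
        have hi'N2 : i' ∈ N2 := Finset.mem_of_mem_inter_right hi'V
        have hi'V' : i' ∈ V := Finset.mem_of_mem_inter_left hi'V
        set U' := insert i' (U.erase i) with hU'
        have hswap : χ U ↔ χ U' := swap_iff (heq2 i hiC i' hi'N2) hiU hi'U
        have hiN1 : i ∉ N1 := fun h => (Finset.disjoint_left.mp hdisj h) hiC
        have hi'N1 : i' ∉ N1 := fun h => (Finset.disjoint_left.mp hdisj h) hi'N2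
        have hc' : (U' \ V).card ≤ k := by
          have hsub : U' \ V ⊆ (U \ V).erase i := by
            intro x hx
            rcases Finset.mem_sdiff.mp hx with ⟨hx1, hx2⟩
            rcases Finset.mem_insert.mp hx1 with h | h
            · exact absurd (h ▸ hi'V') hx2
            · exact Finset.mem_erase.mpr ⟨(Finset.mem_erase.mp h).1,
                Finset.mem_sdiff.mpr ⟨(Finset.mem_erase.mp h).2, hx2⟩⟩
          calc (U' \ V).card ≤ ((U \ V).erase i).card := Finset.card_le_card hsub
            _ = (U \ V).card - 1 := Finset.card_erase_of_mem hi
            _ ≤ k := by omega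
        have hU'2 : (U' ∩ N2).card = (U ∩ N2).card := by
          have e1 : U' ∩ N2 = insert i' ((U ∩ N2).erase i) := by
            ext x
            simp only [hU', Finset.mem_inter, Finset.mem_insert, Finset.mem_erase]
            constructor
            · rintro ⟨h | ⟨hxi, hxU⟩, hxN⟩
              · exact Or.inl h
              · exact Or.inr ⟨hxi, hxU, hxN⟩
            · rintro (h | ⟨hxi, hxU, hxN⟩)
              · exact ⟨Or.inl h, h ▸ hi'N2⟩
              · exact ⟨Or.inr ⟨hxi, hxU⟩, hxN⟩
          rw [e1, Finset.card_insert_of_notMem (fun h => hi'U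
              (Finset.mem_of_mem_inter_left (Finset.mem_of_mem_erase h))),
            Finset.card_erase_of_mem (Finset.mem_inter.mpr ⟨hiU, hiC⟩)]
          have : 0 < (U ∩ N2).card := Finset.card_pos.mpr ⟨i, Finset.mem_inter.mpr ⟨hiU, hiC⟩⟩
          omega
        have hU'1 : U' ∩ N1 = U ∩ N1 := by
          ext x
          simp only [hU', Finset.mem_inter, Finset.mem_insert, Finset.mem_erase]
          constructor
          · rintro ⟨h | ⟨hxi, hxU⟩, hxN⟩
            · exact absurd (h ▸ hxN) hi'N1
            · exact ⟨hxU, hxN⟩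
          · rintro ⟨hxU, hxN⟩
            exact ⟨Or.inr ⟨fun h => hiN1 (h ▸ hxN), hxU⟩, hxN⟩
        rw [hswap]
        exact ih U' V hc' (hU'1 ▸ h1) (hU'2.trans h2)

lemma typeDet' (hdisj : Disjoint N1 N2) (hcover : N1 ∪ N2 = Finset.univ)
    (heq1 : ∀ i ∈ N1, ∀ j ∈ N1, VEquiv χ i j)
    (heq2 : ∀ i ∈ N2, ∀ j ∈ N2, VEquiv χ i j) (U V : Finset (Fin n))
    (h1 : (U ∩ N1).card = (V ∩ N1).card) (h2 : (U ∩ N2).card = (V ∩ N2).card) :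
    χ U ↔ χ V :=
  typeDet hdisj hcover heq1 heq2 (U \ V).card U V le_rfl h1 h2

lemma union_inter_cards (hdisj : Disjoint N1 N2) {S1 S2 : Finset (Fin n)}
    (hS1 : S1 ⊆ N1) (hS2 : S2 ⊆ N2) :
    (S1 ∪ S2) ∩ N1 = S1 ∧ (S1 ∪ S2) ∩ N2 = S2 := by
  constructor
  · rw [Finset.union_inter_distrib_right, Finset.inter_eq_left.mpr hS1,
      Finset.disjoint_iff_inter_eq_empty.mp ((hdisj.symm.mono_left hS2)), Finset.union_empty]
  · rw [Finset.union_inter_distrib_right, Finset.inter_eq_left.mpr hS2,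
      Finset.disjoint_iff_inter_eq_empty.mp ((hdisj.mono_left hS1)), Finset.empty_union]

lemma winUp (hmono : ∀ U V : Finset (Fin n), U ⊆ V → χ U → χ V)
    (hdisj : Disjoint N1 N2) (hcover : N1 ∪ N2 = Finset.univ)
    (heq1 : ∀ i ∈ N1, ∀ j ∈ N1, VEquiv χ i j)
    (heq2 : ∀ i ∈ N2, ∀ j ∈ N2, VEquiv χ i j) {U V : Finset (Fin n)} (hU : χ U)
    (h1 : (U ∩ N1).card ≤ (V ∩ N1).card) (h2 : (U ∩ N2).card ≤ (V ∩ N2).card) : χ V := by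
  obtain ⟨S1, hS1, hc1⟩ := Finset.exists_subset_card_eq h1
  obtain ⟨S2, hS2, hc2⟩ := Finset.exists_subset_card_eq h2
  have hS1' : S1 ⊆ N1 := hS1.trans Finset.inter_subset_right
  have hS2' : S2 ⊆ N2 := hS2.trans Finset.inter_subset_right
  obtain ⟨e1, e2⟩ := union_inter_cards hdisj hS1' hS2'
  have hW : χ (S1 ∪ S2) := by
    rw [typeDet' hdisj hcover heq1 heq2 (S1 ∪ S2) U (by rw [e1, hc1]) (by rw [e2, hc2])]
    exact hU
  exact hmono _ V (Finset.union_subset (hS1.trans Finset.inter_subset_left)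
    (hS2.trans Finset.inter_subset_left)) hW

lemma realizeType (hdisj : Disjoint N1 N2) {c1 c2 : ℕ}
    (h1 : c1 ≤ N1.card) (h2 : c2 ≤ N2.card) :
    ∃ U : Finset (Fin n), (U ∩ N1).card = c1 ∧ (U ∩ N2).card = c2 := by
  obtain ⟨S1, hS1, hc1⟩ := Finset.exists_subset_card_eq h1
  obtain ⟨S2, hS2, hc2⟩ := Finset.exists_subset_card_eq h2
  obtain ⟨e1, e2⟩ := union_inter_cards hdisj hS1 hS2
  exact ⟨S1 ∪ S2, by rw [e1, hc1], by rw [e2, hc2]⟩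

end Aux

theorem stmt4 (n : ℕ) (χ : Finset (Fin n) → Prop) (hsg : SimpleGame n χ)
    (hwt : IsWeighted χ) (N1 N2 : Finset (Fin n)) (h2 : TwoTypes χ N1 N2)
    (hnull : ∀ i, ¬ NullVoter χ i) (hr : 2 ≤ NumWinTypes2 χ N1 N2) :
    ∀ w1 w2 q : ℝ, LPFeasible χ N1 N2 w1 w2 q → w2 + 1 ≤ w1 := by
  classical
  obtain ⟨hmono, hempty, huniv⟩ := hsg
  obtain ⟨hN1ne, hN2ne, hdisj, hcover, heq1, heq2, hsd⟩ := h2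
  intro w1 w2 q hLP
  obtain ⟨hw1, hw2, hq0, hWin, hLose⟩ := hLP
  -- two distinct shift-minimal winning types
  have hr' : 1 < Set.ncard
      {p : ℕ × ℕ | ∃ U, ShiftMinWin χ U ∧ p = ((U ∩ N1).card, (U ∩ N2).card)} := hr
  have hfin : Set.Finite
      {p : ℕ × ℕ | ∃ U, ShiftMinWin χ U ∧ p = ((U ∩ N1).card, (U ∩ N2).card)} := by
    by_contra h
    rw [Set.Infinite.ncard h] at hr'
    omega
  obtain ⟨p, hp, p', hp', hne⟩ := (Set.one_lt_ncard hfin).mp hr'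
  obtain ⟨U0, hU0, hpU⟩ := hp
  obtain ⟨W0, hW0, hpW⟩ := hp'
  -- comparable types of shift-minimal winning coalitions are equal
  have hcmp : ∀ U W : Finset (Fin n), ShiftMinWin χ U → ShiftMinWin χ W →
      (U ∩ N1).card ≤ (W ∩ N1).card → (U ∩ N2).card ≤ (W ∩ N2).card →
      (U ∩ N1).card = (W ∩ N1).card ∧ (U ∩ N2).card = (W ∩ N2).card := by
    intro U W hU hW h1 h2
    rcases Nat.lt_or_ge (U ∩ N1).card (W ∩ N1).card with hlt | hge
    · exfalso
      obtain ⟨i, hi⟩ : (W ∩ N1).Nonempty := Finset.card_pos.mp (by omega)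
      apply hW.2.1 i (Finset.mem_of_mem_inter_left hi)
      apply winUp hmono hdisj hcover heq1 heq2 hU.1
      · rw [Finset.erase_inter, Finset.card_erase_of_mem hi]
        omega
      · rw [Finset.erase_inter, Finset.erase_eq_of_notMem
          (fun hmem => Finset.disjoint_left.mp hdisj (Finset.mem_of_mem_inter_right hi)
            (Finset.mem_of_mem_inter_right hmem))]
        exact h2
    · rcases Nat.lt_or_ge (U ∩ N2).card (W ∩ N2).card with hlt2 | hge2
      · exfalso
        obtain ⟨i, hi⟩ : (W ∩ N2).Nonempty := Finset.card_pos.mp (by omega)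
        apply hW.2.1 i (Finset.mem_of_mem_inter_left hi)
        apply winUp hmono hdisj hcover heq1 heq2 hU.1
        · rw [Finset.erase_inter, Finset.erase_eq_of_notMem
            (fun hmem => Finset.disjoint_left.mp hdisj (Finset.mem_of_mem_inter_right hmem)
              (Finset.mem_of_mem_inter_right hi))]
          omega
        · rw [Finset.erase_inter, Finset.card_erase_of_mem hi]
          omega
      · omega
  -- main argument, for U with strictly larger N1-part
  have key : ∀ U W : Finset (Fin n), ShiftMinWin χ U → ShiftMinWin χ W →
      (W ∩ N1).card < (U ∩ N1).card → (U ∩ N2).card < (W ∩ N2).card → w2 + 1 ≤ w1 := by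
    intro U W hU hW hb1 hb2
    have ha1pos : 0 < (U ∩ N1).card := by omega
    obtain ⟨i, hi⟩ : (U ∩ N1).Nonempty := Finset.card_pos.mp ha1pos
    have hiU : i ∈ U := Finset.mem_of_mem_inter_left hi
    have hiN1 : i ∈ N1 := Finset.mem_of_mem_inter_right hi
    have hiN2 : i ∉ N2 := Finset.disjoint_left.mp hdisj hiN1
    have ha2lt : (U ∩ N2).card < N2.card :=
      lt_of_lt_of_le hb2 (Finset.card_le_card Finset.inter_subset_right)
    obtain ⟨j, hj⟩ : (N2 \ U).Nonempty := by
      rw [Finset.sdiff_nonempty]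
      intro hsub
      rw [Finset.inter_eq_right.mpr hsub] at ha2lt
      omega
    have hjN2 : j ∈ N2 := (Finset.mem_sdiff.mp hj).1
    have hjN1 : j ∉ N1 := fun h => Finset.disjoint_left.mp hdisj h hjN2
    have hjU : j ∉ U := (Finset.mem_sdiff.mp hj).2
    have hV0lose : ¬ χ (insert j (U.erase i)) := hU.2.2 i hiU j hjU (hsd i hiN1 j hjN2)
    have hV01 : ((insert j (U.erase i)) ∩ N1).card = (U ∩ N1).card - 1 := by
      rw [Finset.insert_inter_of_notMem hjN1, Finset.erase_inter,
        Finset.card_erase_of_mem hi]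
    have hV02 : ((insert j (U.erase i)) ∩ N2).card = (U ∩ N2).card + 1 := by
      rw [Finset.insert_inter_of_mem hjN2, Finset.erase_inter,
        Finset.erase_eq_of_notMem (fun h => hiN2 (Finset.mem_of_mem_inter_right h)),
        Finset.card_insert_of_notMem (fun h => hjU (Finset.mem_of_mem_inter_left h))]
    -- the set of losing second coordinates with first coordinate a1 - 1
    set P : ℕ → Prop := fun y => ∀ S : Finset (Fin n),
      (S ∩ N1).card = (U ∩ N1).card - 1 → (S ∩ N2).card = y → ¬ χ S with hPdef
    set Tset : Finset ℕ := (Finset.range (N2.card + 1)).filter P with hTdef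
    have hmemT : (U ∩ N2).card + 1 ∈ Tset := by
      rw [hTdef, Finset.mem_filter, Finset.mem_range]
      refine ⟨by omega, ?_⟩
      intro S h1 h2 hS
      exact hV0lose ((typeDet' hdisj hcover heq1 heq2 S (insert j (U.erase i))
        (by rw [h1, hV01]) (by rw [h2, hV02])).mp hS)
    have hTne : Tset.Nonempty := ⟨_, hmemT⟩
    set y := Tset.max' hTne with hydef
    have hymem : y ∈ Tset := Finset.max'_mem Tset hTne
    have hyle : y ≤ N2.card := by
      have := (Finset.mem_filter.mp hymem).1
      rw [Finset.mem_range] at this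
      omega
    have hyP : P y := (Finset.mem_filter.mp hymem).2
    have hyge : (U ∩ N2).card + 1 ≤ y := Finset.le_max' Tset _ hmemT
    have ha1le : (U ∩ N1).card ≤ N1.card := Finset.card_le_card Finset.inter_subset_right
    obtain ⟨L, hL1, hL2⟩ := realizeType (N1 := N1) (N2 := N2) hdisj
      (show (U ∩ N1).card - 1 ≤ N1.card by omega) hyle
    have hLlose : ¬ χ L := hyP L hL1 hL2
    have hSML : ShiftMaxLose χ L := by
      refine ⟨hLlose, ?_, ?_⟩
      · intro k hkL
        have hkN : k ∈ N1 ∪ N2 := by rw [hcover]; exact Finset.mem_univ k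
        rcases Finset.mem_union.mp hkN with hk | hk
        · apply winUp hmono hdisj hcover heq1 heq2 hU.1
          · rw [Finset.insert_inter_of_mem hk, Finset.card_insert_of_notMem
              (fun h => hkL (Finset.mem_of_mem_inter_left h)), hL1]
            omega
          · rw [Finset.insert_inter_of_notMem
              (fun h => Finset.disjoint_left.mp hdisj hk h), hL2]
            omega
        · have hkN1 : k ∉ N1 := fun h => Finset.disjoint_left.mp hdisj h hk
          have hylt : y < N2.card := by
            have hsub : L ∩ N2 ⊆ N2.erase k := fun x hx => Finset.mem_erase.mpr
              ⟨fun he => hkL (he ▸ Finset.mem_of_mem_inter_left hx),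
                Finset.mem_of_mem_inter_right hx⟩
            have hcard := Finset.card_le_card hsub
            rw [hL2, Finset.card_erase_of_mem hk] at hcard
            have hpos : 0 < N2.card := Finset.card_pos.mpr ⟨k, hk⟩
            omega
          by_contra hnotwin
          have hPy1 : P (y + 1) := by
            intro S h1 h2 hS
            exact hnotwin ((typeDet' hdisj hcover heq1 heq2 S (insert k L)
              (by rw [h1, Finset.insert_inter_of_notMem hkN1, hL1])
              (by rw [h2, Finset.insert_inter_of_mem hk, Finset.card_insert_of_notMem
                (fun h => hkL (Finset.mem_of_mem_inter_left h)), hL2])).mp hS)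
          have : y + 1 ∈ Tset := by
            rw [hTdef, Finset.mem_filter, Finset.mem_range]
            exact ⟨by omega, hPy1⟩
          have := Finset.le_max' Tset _ this
          omega
      · intro j' hj'L i' hi'L hstrict
        have hi'N : i' ∈ N1 ∪ N2 := by rw [hcover]; exact Finset.mem_univ i'
        have hj'N : j' ∈ N1 ∪ N2 := by rw [hcover]; exact Finset.mem_univ j'
        have hclass : i' ∈ N1 ∧ j' ∈ N2 := by
          rcases Finset.mem_union.mp hi'N with hi' | hi' <;>
            rcases Finset.mem_union.mp hj'N with hj' | hj'
          · exact absurd (heq1 j' hj' i' hi').1 hstrict.2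
          · exact ⟨hi', hj'⟩
          · exact absurd hstrict.1 (hsd j' hj' i' hi').2
          · exact absurd (heq2 j' hj' i' hi').1 hstrict.2
        obtain ⟨hi'N1, hj'N2⟩ := hclass
        have hi'N2 : i' ∉ N2 := Finset.disjoint_left.mp hdisj hi'N1
        have hj'N1 : j' ∉ N1 := fun h => Finset.disjoint_left.mp hdisj h hj'N2
        apply winUp hmono hdisj hcover heq1 heq2 hU.1
        · rw [Finset.insert_inter_of_mem hi'N1, Finset.erase_inter,
            Finset.erase_eq_of_notMem (fun h => hj'N1 (Finset.mem_of_mem_inter_right h)),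
            Finset.card_insert_of_notMem (fun h => hi'L (Finset.mem_of_mem_inter_left h)),
            hL1]
          omega
        · rw [Finset.insert_inter_of_notMem hi'N2, Finset.erase_inter,
            Finset.card_erase_of_mem (Finset.mem_inter.mpr ⟨hj'L, hj'N2⟩), hL2]
          omega
    -- the linear programming inequalities
    have hWq := hWin U hU
    have hLq := hLose L hSML
    rw [hL1, hL2] at hLq
    have hcast : (((U ∩ N1).card - 1 : ℕ) : ℝ) = ((U ∩ N1).card : ℝ) - 1 := by
      rw [Nat.cast_sub ha1pos]
      norm_num
    rw [hcast] at hLq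
    have hy : ((U ∩ N2).card : ℝ) + 1 ≤ (y : ℝ) := by exact_mod_cast hyge
    nlinarith [mul_le_mul_of_nonneg_right hy hw2]
  -- orient the two distinct types
  rcases Nat.lt_trichotomy ((U0 ∩ N1).card) ((W0 ∩ N1).card) with h | h | h
  · have hgt : (W0 ∩ N2).card < (U0 ∩ N2).card := by
      by_contra hle
      obtain ⟨e1, e2⟩ := hcmp U0 W0 hU0 hW0 h.le (by omega)
      omega
    exact key W0 U0 hW0 hU0 h hgt
  · exfalso
    rcases Nat.lt_trichotomy ((U0 ∩ N2).card) ((W0 ∩ N2).card) with h2 | h2 | h2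
    · obtain ⟨e1, e2⟩ := hcmp U0 W0 hU0 hW0 h.le h2.le
      omega
    · exact hne (by rw [hpU, hpW, h, h2])
    · obtain ⟨e1, e2⟩ := hcmp W0 U0 hW0 hU0 h.ge h2.le
      omega
  · have hgt : (U0 ∩ N2).card < (W0 ∩ N2).card := by
      by_contra hle
      obtain ⟨e1, e2⟩ := hcmp W0 U0 hW0 hU0 h.le (by omega)
      omega
    exact key U0 W0 hU0 hW0 h hgt
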